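/- If p ≥ 5 is a prime number, then the binomial coefficient C(2p−1, p−1) is congruent to 1 modulo p³. -/

import Mathlib

open Finset

lemma choose_sub_one_cast (p : ℕ) (hp : p.Prime) : ∀ j, j < p →
    (((p-1).choose j : ZMod p)) = (-1)^j := by
  intro j
  induction j with
  | zero => intro _; simp
  | succ j ih =>
    intro hj
    have hps : p - 1 + 1 = p := by have := hp.two_le; omega
    have h1 : (p-1).choose j + (p-1).choose (j+1) = p.choose (j+1) := by
      rw [← Nat.choose_succ_succ]
      simp only [Nat.succ_eq_add_one, hps]
    have hdvd : (p.choose (j+1) : ZMod p) = 0 := by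
      rw [ZMod.natCast_eq_zero_iff]
      exact hp.dvd_choose_self (Nat.succ_ne_zero j) hj
    have h2 := congrArg (fun n : ℕ => (n : ZMod p)) h1
    push_cast at h2
    rw [hdvd, ih (by omega)] at h2
    have h3 : ((p-1).choose (j+1) : ZMod p) = -(-1)^j := by linear_combination h2
    rw [h3, pow_succ]
    ring

lemma p_sq_mul_eq_zero (p : ℕ) (hp : 0 < p) (x : ZMod (p^3))
    (hx : ZMod.castHom (dvd_pow_self p three_ne_zero) (ZMod p) x = 0) :
    (p : ZMod (p^3))^2 * x = 0 := by
  haveI : NeZero (p^3) := ⟨by positivity⟩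
  have hval : ((x.val : ℕ) : ZMod p) = 0 := by
    rwa [ZMod.castHom_apply, ← ZMod.natCast_val] at hx
  obtain ⟨m, hm⟩ := (ZMod.natCast_eq_zero_iff _ _).mp hval
  have hx2 : x = ((p * m : ℕ) : ZMod (p^3)) := by
    rw [← hm, ZMod.natCast_val, ZMod.cast_id]
  have h3 : ((p : ZMod (p^3)))^3 = 0 := by
    have := ZMod.natCast_self (p^3)
    push_cast at this
    exact this
  rw [hx2]
  push_cast
  linear_combination (m : ZMod (p^3)) * h3

theorem wolstenholme (p : ℕ) (hp : p.Prime) (h5 : 5 ≤ p) :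
    (2 * p - 1).choose (p - 1) ≡ 1 [MOD p ^ 3] := by
  haveI := Fact.mk hp
  have hp0 : 0 < p := by omega
  haveI : NeZero (p^3) := ⟨by positivity⟩
  set R := ZMod (p^3) with hR
  set φ : ZMod (p^3) →+* ZMod p := ZMod.castHom (dvd_pow_self p three_ne_zero) (ZMod p) with hφ
  -- Vandermonde: central binomial as sum of squares
  have hvd : (2*p).choose p = ∑ k ∈ range (p+1), (p.choose k)^2 := by
    have h := Nat.add_choose_eq p p p
    rw [Finset.Nat.sum_antidiagonal_eq_sum_range_succ_mk] at h
    rw [two_mul, h]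
    refine Finset.sum_congr rfl fun k hk => ?_
    have hk' : k ≤ p := by
      rw [Finset.mem_range] at hk; omega
    rw [sq, Nat.choose_symm hk']
  have hsplit : (2*p).choose p = 2 + ∑ k ∈ Ico 1 p, (p.choose k)^2 := by
    rw [hvd, Finset.sum_range_succ, Nat.choose_self, Finset.range_eq_Ico,
      Finset.sum_eq_sum_Ico_succ_bot hp0]
    simp only [Nat.choose_zero_right, one_pow, zero_add]
    omega
  -- facts about units
  have hunit : ∀ k, 1 ≤ k → k < p → IsUnit (k : R) := by
    intro k hk1 hkp
    rw [ZMod.isUnit_iff_coprime]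
    apply Nat.Coprime.pow_right
    exact ((hp.coprime_iff_not_dvd).mpr (fun h => by
      have := Nat.le_of_dvd (by omega) h; omega)).symm
  have hφk : ∀ k, 1 ≤ k → k < p → φ ((k : R)⁻¹) = ((k : ZMod p))⁻¹ := by
    intro k hk1 hkp
    have h1 : (k : R) * (k : R)⁻¹ = 1 := ZMod.mul_inv_of_unit _ (hunit k hk1 hkp)
    have h2 := congrArg φ h1
    rw [map_mul, map_one, map_natCast] at h2
    exact (inv_eq_of_mul_eq_one_right h2).symm
  -- key: central binomial ≡ 2 mod p^3
  have hkey : (2*p).choose p ≡ 2 [MOD p^3] := by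
    rw [← ZMod.natCast_eq_natCast_iff, hsplit]
    push_cast
    have hterm : ∀ k ∈ Ico 1 p, ((p.choose k : R))^2 = (p:R)^2 * ((k:R)⁻¹)^2 := by
      intro k hk
      rw [Finset.mem_Ico] at hk
      obtain ⟨hk1, hkp⟩ := hk
      have hu := hunit k hk1 hkp
      -- p.choose k * k = p * (p-1).choose (k-1) in ℕ
      have hck : p.choose k * k = p * (p-1).choose (k-1) := by
        have := Nat.add_one_mul_choose_eq (p-1) (k-1)
        rw [show p-1+1 = p by omega, show k-1+1 = k by omega] at this
        omega
      have hckR : (p.choose k : R) * (k : R) = (p : R) * ((p-1).choose (k-1) : R) := by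
        rw [← Nat.cast_mul, ← Nat.cast_mul, hck]
      have hinv : (k : R) * (k : R)⁻¹ = 1 := ZMod.mul_inv_of_unit _ hu
      have hC : (p.choose k : R) = (p : R) * ((p-1).choose (k-1) : R) * (k : R)⁻¹ := by
        calc (p.choose k : R) = (p.choose k : R) * ((k : R) * (k : R)⁻¹) := by rw [hinv, mul_one]
          _ = ((p.choose k : R) * (k : R)) * (k : R)⁻¹ := by ring
          _ = (p : R) * ((p-1).choose (k-1) : R) * (k : R)⁻¹ := by rw [hckR]
      rw [hC]
      -- now kill the (p-1).choose (k-1) factor mod p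
      have hx0 : φ ((((p-1).choose (k-1) : R))^2 * ((k:R)⁻¹)^2 - ((k:R)⁻¹)^2) = 0 := by
        rw [map_sub, map_mul, map_pow, map_pow, map_natCast,
          choose_sub_one_cast p hp (k-1) (by omega)]
        rw [← pow_mul, mul_comm (k-1) 2, pow_mul, neg_one_sq, one_pow, one_mul, sub_self]
      have := p_sq_mul_eq_zero p hp0 _ hx0
      linear_combination this
    rw [Finset.sum_congr rfl hterm, ← Finset.mul_sum]
    have hS0 : φ (∑ k ∈ Ico 1 p, ((k:R)⁻¹)^2) = 0 := by
      rw [map_sum]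
      have : ∀ k ∈ Ico 1 p, φ (((k:R)⁻¹)^2) = (((k : ZMod p))⁻¹)^2 := by
        intro k hk
        rw [Finset.mem_Ico] at hk
        rw [map_pow, hφk k hk.1 hk.2]
      rw [Finset.sum_congr rfl this]
      -- sum of inverse squares over 1..p-1 is 0 mod p
      have e1 : ∑ k ∈ Ico 1 p, (((k : ZMod p))⁻¹)^2
          = ∑ k ∈ range p, (((k : ZMod p))⁻¹)^2 := by
        rw [Finset.range_eq_Ico, Finset.sum_eq_sum_Ico_succ_bot hp0]
        simp
      have e2 : ∑ k ∈ range p, (((k : ZMod p))⁻¹)^2 = ∑ x : ZMod p, (x⁻¹)^2 := by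
        refine Finset.sum_nbij' (fun k => (k : ZMod p)) (fun x => x.val)
          (fun a _ => Finset.mem_univ _)
          (fun x _ => by rw [Finset.mem_range]; exact ZMod.val_lt x)
          (fun a ha => by rw [Finset.mem_range] at ha; exact ZMod.val_cast_of_lt ha)
          (fun x _ => ZMod.natCast_rightInverse x)
          (fun a _ => rfl)
      have e3 : ∑ x : ZMod p, (x⁻¹ : ZMod p)^2 = ∑ x : ZMod p, x^2 := by
        exact Finset.sum_bijective _ inv_involutive.bijective
          (fun x => by simp) (fun x _ => rfl)
      have e4 : ∑ x : ZMod p, (x : ZMod p)^2 = 0 := by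
        have hc : Fintype.card (ZMod p) = p := ZMod.card p
        exact FiniteField.sum_pow_lt_card_sub_one (ZMod p) 2 (by rw [hc]; omega)
      rw [e1, e2, e3, e4]
    have hz := p_sq_mul_eq_zero p hp0 _ hS0
    rw [hz]
    ring
  -- reduce to the stated binomial
  have e1 := Nat.choose_succ_succ (2*p-1) (p-1)
  simp only [Nat.succ_eq_add_one] at e1
  rw [show 2*p-1+1 = 2*p by omega, show p-1+1 = p by omega] at e1
  have e2 : (2*p-1).choose p = (2*p-1).choose (p-1) := by
    have := Nat.choose_symm (show p-1 ≤ 2*p-1 by omega)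
    rwa [show 2*p-1-(p-1) = p by omega] at this
  have hdouble : (2*p).choose p = 2 * ((2*p-1).choose (p-1)) := by omega
  have h2 : 2 * ((2*p-1).choose (p-1)) ≡ 2 * 1 [MOD p^3] := by
    rw [← hdouble]; simpa using hkey
  refine Nat.ModEq.cancel_left_of_coprime ?_ h2
  have hc2 : Nat.Coprime 2 (p^3) := by
    apply Nat.Coprime.pow_right
    rw [Nat.coprime_primes Nat.prime_two hp]
    omega
  simpa [Nat.Coprime, Nat.gcd_comm] using hc2
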